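/- The essential accumulation set essacc{x_i} of a bounded sequence {x_i} ⊂ ℝⁿ with respect to positive weights ε_i with Σε_i = ∞ is a closed (hence compact) subset of ℝⁿ, contained in the ordinary accumulation set acc{x_i}, and is nonempty. -/

import Mathlib

open Filter Finset Classical Topology
noncomputable section

/-- The essential accumulation set of a sequence `x` with respect to time weights `ε`:
points all whose neighborhoods carry a positive asymptotic proportion of the total time. -/
def essAcc {n : ℕ} (ε : ℕ → ℝ) (x : ℕ → EuclideanSpace ℝ (Fin n)) :
    Set (EuclideanSpace ℝ (Fin n)) :=
  {p | ∀ U ∈ nhds p,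
    0 < Filter.limsup (fun N =>
      (∑ i ∈ range (N + 1), if x i ∈ U then ε i else 0) /
        ∑ i ∈ range (N + 1), ε i) atTop}

section Aux
variable {n : ℕ} (ε : ℕ → ℝ) (x : ℕ → EuclideanSpace ℝ (Fin n))

def essRat (U : Set (EuclideanSpace ℝ (Fin n))) (N : ℕ) : ℝ :=
  (∑ i ∈ range (N + 1), if x i ∈ U then ε i else 0) / ∑ i ∈ range (N + 1), ε i

lemma essDen_pos (hεpos : ∀ i, 0 < ε i) (N : ℕ) : 0 < ∑ i ∈ range (N + 1), ε i :=
  Finset.sum_pos (fun i _ => hεpos i) (by simp)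

lemma essNum_nonneg (U : Set (EuclideanSpace ℝ (Fin n))) (hεpos : ∀ i, 0 < ε i) (N : ℕ) :
    0 ≤ ∑ i ∈ range (N + 1), if x i ∈ U then ε i else 0 :=
  Finset.sum_nonneg fun i _ => by by_cases h : x i ∈ U <;> simp [h, (hεpos i).le]

lemma essRat_nonneg (U : Set (EuclideanSpace ℝ (Fin n))) (hεpos : ∀ i, 0 < ε i) (N : ℕ) :
    0 ≤ essRat ε x U N :=
  div_nonneg (essNum_nonneg ε x U hεpos N) (essDen_pos ε hεpos N).le

lemma essRat_le_one (U : Set (EuclideanSpace ℝ (Fin n))) (hεpos : ∀ i, 0 < ε i) (N : ℕ) :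
    essRat ε x U N ≤ 1 := by
  rw [essRat, div_le_one (essDen_pos ε hεpos N)]
  exact Finset.sum_le_sum fun i _ => by by_cases h : x i ∈ U <;> simp [h, (hεpos i).le]

lemma essRat_bddAbove (U : Set (EuclideanSpace ℝ (Fin n))) (hεpos : ∀ i, 0 < ε i) :
    IsBoundedUnder (· ≤ ·) atTop (essRat ε x U) :=
  isBoundedUnder_of ⟨1, fun N => essRat_le_one ε x U hεpos N⟩

lemma essRat_bddBelow (U : Set (EuclideanSpace ℝ (Fin n))) (hεpos : ∀ i, 0 < ε i) :
    IsBoundedUnder (· ≥ ·) atTop (essRat ε x U) :=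
  isBoundedUnder_of ⟨0, fun N => essRat_nonneg ε x U hεpos N⟩

lemma essRat_mono (hεpos : ∀ i, 0 < ε i) {V U : Set (EuclideanSpace ℝ (Fin n))}
    (h : V ⊆ U) (N : ℕ) : essRat ε x V N ≤ essRat ε x U N := by
  rw [essRat, essRat, div_le_div_iff_of_pos_right (essDen_pos ε hεpos N)]
  refine Finset.sum_le_sum fun i _ => ?_
  by_cases hv : x i ∈ V
  · simp [hv, h hv]
  · by_cases hu : x i ∈ U <;> simp [hv, hu, (hεpos i).le]

lemma essRat_tendsto_zero (hεpos : ∀ i, 0 < ε i) {U : Set (EuclideanSpace ℝ (Fin n))}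
    (h : limsup (essRat ε x U) atTop ≤ 0) :
    Tendsto (essRat ε x U) atTop (𝓝 0) := by
  have h0 : (0:ℝ) ≤ liminf (essRat ε x U) atTop :=
    le_liminf_of_le (essRat_bddAbove ε x U hεpos).isCoboundedUnder_ge
      (Eventually.of_forall fun N => essRat_nonneg ε x U hεpos N)
  have hle : liminf (essRat ε x U) atTop ≤ limsup (essRat ε x U) atTop :=
    liminf_le_limsup (essRat_bddAbove ε x U hεpos) (essRat_bddBelow ε x U hεpos)
  exact tendsto_of_liminf_eq_limsup (le_antisymm (hle.trans h) h0)
    (le_antisymm h (h0.trans hle)) (essRat_bddAbove ε x U hεpos) (essRat_bddBelow ε x U hεpos)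

end Aux

lemma essAcc_ratEq {n : ℕ} (ε : ℕ → ℝ) (x : ℕ → EuclideanSpace ℝ (Fin n)) :
    essAcc ε x = {p | ∀ U ∈ nhds p, 0 < limsup (essRat ε x U) atTop} := rfl


/-- For a bounded sequence `{x_i} ⊂ ℝⁿ` and positive weights `ε_i` with
`Σ ε_i = ∞`, the essential accumulation set is closed (hence compact), contained in the
ordinary accumulation set, and nonempty. -/
theorem stmt13 {n : ℕ}
    (ε : ℕ → ℝ) (hεpos : ∀ i, 0 < ε i)
    (hεdiv : Tendsto (fun N => ∑ i ∈ range N, ε i) atTop atTop)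
    (x : ℕ → EuclideanSpace ℝ (Fin n))
    (K : Set (EuclideanSpace ℝ (Fin n))) (hK : IsCompact K)
    (hxK : ∀ i, x i ∈ K) :
    IsClosed (essAcc ε x) ∧ IsCompact (essAcc ε x) ∧
      essAcc ε x ⊆ {p | MapClusterPt p atTop x} ∧ (essAcc ε x).Nonempty := by
  rw [essAcc_ratEq]
  -- closedness
  have hclosed : IsClosed {p | ∀ U ∈ nhds p, 0 < limsup (essRat ε x U) atTop} := by
    rw [← isOpen_compl_iff]
    rw [isOpen_iff_mem_nhds]
    intro p hp
    simp only [Set.mem_compl_iff, Set.mem_setOf_eq, not_forall, not_lt] at hp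
    obtain ⟨W, hW, hlimW⟩ := hp
    obtain ⟨V, hVW, hVopen, hpV⟩ := mem_nhds_iff.mp hW
    refine mem_of_superset (hVopen.mem_nhds hpV) fun q hq => ?_
    simp only [Set.mem_compl_iff, Set.mem_setOf_eq, not_forall, not_lt]
    refine ⟨V, hVopen.mem_nhds hq, ?_⟩
    refine le_trans ?_ hlimW
    exact limsup_le_limsup (Eventually.of_forall (essRat_mono ε x hεpos hVW))
      (essRat_bddBelow ε x V hεpos).isCoboundedUnder_le (essRat_bddAbove ε x W hεpos)
  -- contained in K
  have hsubK : {p | ∀ U ∈ nhds p, 0 < limsup (essRat ε x U) atTop} ⊆ K := by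
    intro p hp
    by_contra hpK
    have hmem : Kᶜ ∈ 𝓝 p := hK.isClosed.isOpen_compl.mem_nhds hpK
    have h0 : essRat ε x Kᶜ = fun _ => 0 := by
      funext N
      simp [essRat, fun i => hxK i]
    have := hp _ hmem
    rw [h0] at this
    simp [limsup_const] at this
  -- cluster points
  have hclus : {p | ∀ U ∈ nhds p, 0 < limsup (essRat ε x U) atTop}
      ⊆ {p | MapClusterPt p atTop x} := by
    intro p hp
    rw [Set.mem_setOf_eq, mapClusterPt_iff_frequently]
    intro s hs
    by_contra hfreq
    rw [Filter.not_frequently] at hfreq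
    obtain ⟨M, hM⟩ := eventually_atTop.mp hfreq
    set C := ∑ i ∈ range M, ε i with hC
    have hnum : ∀ N, (∑ i ∈ range (N + 1), if x i ∈ s then ε i else 0) ≤ C := by
      intro N
      rw [← Finset.sum_filter]
      apply Finset.sum_le_sum_of_subset_of_nonneg
      · intro i hi
        rw [Finset.mem_filter] at hi
        rw [Finset.mem_range]
        by_contra hiM
        exact hM i (le_of_not_gt hiM) hi.2
      · exact fun i _ _ => (hεpos i).le
    have hdiv' : Tendsto (fun N => ∑ i ∈ range (N + 1), ε i) atTop atTop :=
      hεdiv.comp (tendsto_add_atTop_nat 1)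
    have htend : Tendsto (fun N => C / ∑ i ∈ range (N + 1), ε i) atTop (𝓝 0) :=
      Tendsto.div_atTop tendsto_const_nhds hdiv'
    have hle : ∀ N, essRat ε x s N ≤ C / ∑ i ∈ range (N + 1), ε i := fun N => by
      unfold essRat
      gcongr
      · exact (essDen_pos ε hεpos N).le
      · exact hnum N
    have : limsup (essRat ε x s) atTop ≤ 0 := by
      calc limsup (essRat ε x s) atTop
          ≤ limsup (fun N => C / ∑ i ∈ range (N + 1), ε i) atTop :=
            limsup_le_limsup (Eventually.of_forall hle)
              (essRat_bddBelow ε x s hεpos).isCoboundedUnder_le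
              htend.isBoundedUnder_le
        _ = 0 := htend.limsup_eq
    exact absurd (hp s hs) (not_lt.mpr this)
  -- nonempty
  have hne : {p | ∀ U ∈ nhds p, 0 < limsup (essRat ε x U) atTop}.Nonempty := by
    by_contra hemp
    rw [Set.not_nonempty_iff_eq_empty] at hemp
    have key : ∀ p : EuclideanSpace ℝ (Fin n),
        ∃ U ∈ 𝓝 p, limsup (essRat ε x U) atTop ≤ 0 := by
      intro p
      have : p ∉ ({p | ∀ U ∈ nhds p, 0 < limsup (essRat ε x U) atTop} :
          Set (EuclideanSpace ℝ (Fin n))) := by rw [hemp]; exact Set.notMem_empty p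
      simp only [Set.mem_setOf_eq, not_forall, not_lt] at this
      obtain ⟨U, h1, h2⟩ := this
      exact ⟨U, h1, h2⟩
    choose U hU hlim using key
    obtain ⟨t, _, ht⟩ := hK.elim_nhds_subcover U fun p _ => hU p
    have hsum : ∀ N, (1:ℝ) ≤ ∑ p ∈ t, essRat ε x (U p) N := by
      intro N
      have hkey : ∑ i ∈ range (N + 1), ε i
          ≤ ∑ p ∈ t, ∑ i ∈ range (N + 1), (if x i ∈ U p then ε i else 0) := by
        rw [Finset.sum_comm]
        refine Finset.sum_le_sum fun i _ => ?_
        have hmem := ht (hxK i)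
        rw [Set.mem_iUnion₂] at hmem
        obtain ⟨p, hpt, hxp⟩ := hmem
        calc ε i = if x i ∈ U p then ε i else 0 := by simp [hxp]
          _ ≤ _ := Finset.single_le_sum (f := fun p => if x i ∈ U p then ε i else 0)
              (fun q _ => by by_cases hq : x i ∈ U q <;> simp [hq, (hεpos i).le]) hpt
      unfold essRat
      rw [← Finset.sum_div, le_div_iff₀ (essDen_pos ε hεpos N), one_mul]
      exact hkey
    have htend : Tendsto (fun N => ∑ p ∈ t, essRat ε x (U p) N) atTop (𝓝 0) := by
      have := tendsto_finset_sum t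
        (fun p _ => essRat_tendsto_zero ε x hεpos (hlim p))
      simpa using this
    have : (1:ℝ) ≤ 0 := ge_of_tendsto htend (Eventually.of_forall hsum)
    linarith
  exact ⟨hclosed, hK.of_isClosed_subset hclosed hsubK, hclus, hne⟩
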